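/- arXiv:2012.12179 — 4 statements merged into one kernel-verified Lean document; each statement's English description precedes it below -/
import Mathlib

section
/- Let R be an S×S real matrix and p : Fin S → ℝ a vector. Define R_succ = diag(p)·R and R_fail = (I − diag(p))·R, where diag(p) is the diagonal matrix with entries p and I is the identity. If a row vector β satisfies β·R = β and the matrix I − R_fail is invertible, then β·R_succ·(I − R_fail)⁻¹ = β. -/
open Matrix

/-- If `β` is stationary for `R` (i.e. `β·R = β`), `R_succ = diag(p)·R`,
`R_fail = (I − diag(p))·R`, and `I − R_fail` is invertible, then
`β·R_succ·(I − R_fail)⁻¹ = β`. -/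
theorem vecMul_succ_inv_one_sub_fail {S : ℕ} (R : Matrix (Fin S) (Fin S) ℝ)
    (p : Fin S → ℝ) (β : Fin S → ℝ)
    (hβ : Matrix.vecMul β R = β)
    (hinv : IsUnit (1 - (1 - Matrix.diagonal p) * R)) :
    Matrix.vecMul (Matrix.vecMul β (Matrix.diagonal p * R))
      (1 - (1 - Matrix.diagonal p) * R)⁻¹ = β := by
  set M := 1 - (1 - Matrix.diagonal p) * R with hM
  have key : Matrix.vecMul β (Matrix.diagonal p * R) = Matrix.vecMul β M := by
    have : Matrix.diagonal p * R = R - (1 - Matrix.diagonal p) * R := by noncomm_ring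
    rw [this, hM, Matrix.vecMul_sub, Matrix.vecMul_sub, hβ, Matrix.vecMul_one]
  rw [key, Matrix.vecMul_vecMul, Matrix.mul_nonsing_inv _ ((Matrix.isUnit_iff_isUnit_det M).mp hinv), Matrix.vecMul_one]
end

section
/- Let R be an S×S real matrix with nonnegative entries and all row sums equal to 1, let p : Fin S → ℝ satisfy 0 ≤ p_i ≤ 1 for all i, and let β be a row vector with nonnegative entries, ∑_i β_i = 1, and β·R = β. Define R_succ = diag(p)·R and R_fail = (I − diag(p))·R, and assume there exists a positive integer m with ‖(R_fail)^m‖ < 1 in the ℓ∞ operator norm. Define φ : ℕ → (Fin S → ℝ) by φ_q = β·R_succ·(R_fail)^q (so φ_q is the block corresponding to age q+1). Then: (i) every entry of every φ_q is nonnegative; (ii) the family (φ_q)_{q≥0} is summable with ∑'_{q=0}^∞ φ_q = β, hence ∑'_{q=0}^∞ ∑_j (φ_q)_j = 1; (iii) φ_{q+1} = φ_q·R_fail for all q; and (iv) φ_0 = (∑'_{q=0}^∞ φ_q)·R_succ. In other words, φ is a stationary probability distribution of the joint age–state chain in which the age resets upon successful observation (sub-transition R_succ) and increments otherwise (sub-transition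 R_fail). -/
open Matrix Filter Finset

-- The `ℓ∞` operator norm (maximum absolute row sum) on square matrices.
attribute [local instance] Matrix.linftyOpNormedRing

/-- The block `φ_q = β·R_succ·R_fail^q` of the stationary distribution of the joint
age–state chain (corresponding to age `q + 1`). -/
noncomputable def statPhi {S : ℕ} (R : Matrix (Fin S) (Fin S) ℝ) (p : Fin S → ℝ)
    (β : Fin S → ℝ) (q : ℕ) : Fin S → ℝ :=
  Matrix.vecMul (Matrix.vecMul β (Matrix.diagonal p * R)) (((1 - Matrix.diagonal p) * R) ^ q)

/-- `φ_q = β·R_succ·R_fail^q` is a stationary probability distribution of the joint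
age–state chain: (i) all entries are nonnegative; (ii) `∑' q, φ_q = β`, hence the total
mass is `1`; (iii) `φ_{q+1} = φ_q·R_fail`; (iv) `φ_0 = (∑' q, φ_q)·R_succ`. -/
theorem statPhi_stationary {S : ℕ} (R : Matrix (Fin S) (Fin S) ℝ) (p : Fin S → ℝ)
    (β : Fin S → ℝ)
    (hR0 : ∀ i j, 0 ≤ R i j) (hR1 : ∀ i, ∑ j, R i j = 1)
    (hp : ∀ i, 0 ≤ p i ∧ p i ≤ 1)
    (hβ0 : ∀ i, 0 ≤ β i) (hβ1 : ∑ i, β i = 1)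
    (hβR : Matrix.vecMul β R = β)
    (m : ℕ) (hm : 0 < m)
    (hnorm : ‖((1 - Matrix.diagonal p) * R) ^ m‖ < 1) :
    (∀ q j, 0 ≤ statPhi R p β q j) ∧
    HasSum (fun q : ℕ => statPhi R p β q) β ∧
    HasSum (fun q : ℕ => ∑ j, statPhi R p β q j) 1 ∧
    (∀ q : ℕ, statPhi R p β (q + 1) =
      Matrix.vecMul (statPhi R p β q) ((1 - Matrix.diagonal p) * R)) ∧
    statPhi R p β 0 =
      Matrix.vecMul (∑' q : ℕ, statPhi R p β q) (Matrix.diagonal p * R) := by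
  set Rf : Matrix (Fin S) (Fin S) ℝ := (1 - Matrix.diagonal p) * R with hRfdef
  set Rs : Matrix (Fin S) (Fin S) ℝ := Matrix.diagonal p * R with hRsdef
  -- entrywise descriptions
  have hRf_apply : ∀ i j, Rf i j = (1 - p i) * R i j := by
    intro i j
    have : Rf = Matrix.diagonal (fun i => 1 - p i) * R := by
      rw [hRfdef, ← Matrix.diagonal_one, Matrix.diagonal_sub]
    rw [this, Matrix.diagonal_mul]
  have hRs_apply : ∀ i j, Rs i j = p i * R i j := fun i j => Matrix.diagonal_mul _ _ _ _
  have hRf0 : ∀ i j, 0 ≤ Rf i j := fun i j => by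
    rw [hRf_apply]
    exact mul_nonneg (by linarith [(hp i).2]) (hR0 i j)
  have hRs0 : ∀ i j, 0 ≤ Rs i j := fun i j => by
    rw [hRs_apply]
    exact mul_nonneg (hp i).1 (hR0 i j)
  -- powers of Rf are nonneg
  have hRfpow0 : ∀ q i j, 0 ≤ (Rf ^ q) i j := by
    intro q
    induction q with
    | zero => intro i j; simp [Matrix.one_apply]; split <;> norm_num
    | succ n ih =>
      intro i j
      rw [pow_succ, Matrix.mul_apply]
      exact Finset.sum_nonneg fun k _ => mul_nonneg (ih i k) (hRf0 k j)
  -- nonnegativity of φ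
  have hphi0 : ∀ q j, 0 ≤ statPhi R p β q j := by
    intro q j
    unfold statPhi
    rw [Matrix.vecMul_vecMul]
    simp only [Matrix.vecMul, dotProduct]
    refine Finset.sum_nonneg fun i _ => mul_nonneg (hβ0 i) ?_
    rw [Matrix.mul_apply]
    exact Finset.sum_nonneg fun k _ => mul_nonneg (hRs0 i k) (hRfpow0 q k j)
  -- telescoping identity
  have hsplit : Rs = R - Rf := by
    rw [hRsdef, hRfdef, sub_mul, one_mul, sub_sub_cancel]
  have htel : ∀ q, statPhi R p β q
      = Matrix.vecMul β (Rf ^ q) - Matrix.vecMul β (Rf ^ (q + 1)) := by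
    intro q
    unfold statPhi
    rw [Matrix.vecMul_vecMul, ← hRsdef, ← hRfdef, hsplit, sub_mul, Matrix.vecMul_sub,
      ← Matrix.vecMul_vecMul, hβR, ← pow_succ']
  -- partial sums
  have hpartial : ∀ n, ∑ q ∈ Finset.range n, statPhi R p β q
      = β - Matrix.vecMul β (Rf ^ n) := by
    intro n
    calc ∑ q ∈ Finset.range n, statPhi R p β q
        = ∑ q ∈ Finset.range n,
            (Matrix.vecMul β (Rf ^ q) - Matrix.vecMul β (Rf ^ (q + 1))) := by
          exact Finset.sum_congr rfl fun q _ => htel q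
      _ = Matrix.vecMul β (Rf ^ 0) - Matrix.vecMul β (Rf ^ n) :=
          Finset.sum_range_sub' (fun q => Matrix.vecMul β (Rf ^ q)) n
      _ = β - Matrix.vecMul β (Rf ^ n) := by simp [Matrix.vecMul_one]
  -- norm of Rf^n tends to 0
  have hr0 : 0 ≤ ‖Rf ^ m‖ := norm_nonneg _
  have hone : ‖(1 : Matrix (Fin S) (Fin S) ℝ)‖ ≤ 1 := by
    rw [← Matrix.diagonal_one, Matrix.linfty_opNorm_diagonal]
    refine (pi_norm_le_iff_of_nonneg zero_le_one).2 fun i => ?_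
    simp
  have hfac1 : ∀ k : ℕ, ‖(Rf ^ m) ^ k‖ ≤ ‖Rf ^ m‖ ^ k := by
    intro k
    rcases Nat.eq_zero_or_pos k with h | h
    · subst h; rw [pow_zero, pow_zero]; exact hone
    · exact norm_pow_le' _ h
  have hC1 : (1 : ℝ) ≤ max 1 ‖Rf‖ := le_max_left _ _
  have hbound : ∀ n, ‖Rf ^ n‖ ≤ (max 1 ‖Rf‖) ^ m * ‖Rf ^ m‖ ^ (n / m) := by
    intro n
    have hdecomp : Rf ^ n = (Rf ^ m) ^ (n / m) * Rf ^ (n % m) := by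
      rw [← pow_mul, ← pow_add]
      congr 1
      exact (Nat.div_add_mod n m).symm ▸ rfl
    calc ‖Rf ^ n‖ = ‖(Rf ^ m) ^ (n / m) * Rf ^ (n % m)‖ := by rw [hdecomp]
      _ ≤ ‖(Rf ^ m) ^ (n / m)‖ * ‖Rf ^ (n % m)‖ := norm_mul_le _ _
      _ ≤ ‖Rf ^ m‖ ^ (n / m) * (max 1 ‖Rf‖) ^ m := by
          refine mul_le_mul (hfac1 _) ?_ (norm_nonneg _) (pow_nonneg (by positivity) _)
          rcases Nat.eq_zero_or_pos (n % m) with h | h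
          · rw [h, pow_zero]
            exact hone.trans (one_le_pow₀ hC1)
          · calc ‖Rf ^ (n % m)‖ ≤ ‖Rf‖ ^ (n % m) := norm_pow_le' _ h
              _ ≤ (max 1 ‖Rf‖) ^ (n % m) :=
                  pow_le_pow_left₀ (norm_nonneg _) (le_max_right _ _) _
              _ ≤ (max 1 ‖Rf‖) ^ m :=
                  pow_le_pow_right₀ hC1 (le_of_lt (Nat.mod_lt _ hm))
      _ = (max 1 ‖Rf‖) ^ m * ‖Rf ^ m‖ ^ (n / m) := mul_comm _ _
  have hdivtop : Tendsto (fun n : ℕ => n / m) atTop atTop := by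
    refine tendsto_atTop_atTop.2 fun b => ⟨m * b, fun n hn => ?_⟩
    exact (Nat.le_div_iff_mul_le hm).2 (by linarith [hn])
  have hnormtendsto : Tendsto (fun n : ℕ => ‖Rf ^ n‖) atTop (nhds 0) := by
    have h1 : Tendsto (fun n : ℕ => ‖Rf ^ m‖ ^ (n / m)) atTop (nhds 0) :=
      (tendsto_pow_atTop_nhds_zero_of_lt_one hr0 hnorm).comp hdivtop
    have h2 : Tendsto (fun n : ℕ => (max 1 ‖Rf‖) ^ m * ‖Rf ^ m‖ ^ (n / m)) atTop (nhds 0) := by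
      simpa using h1.const_mul ((max 1 ‖Rf‖) ^ m)
    exact squeeze_zero (fun n => norm_nonneg _) hbound h2
  -- entry bound: (β ᵥ* A) j ≤ ‖A‖ for nonneg A with β a prob vector
  have hentry : ∀ (A : Matrix (Fin S) (Fin S) ℝ), (∀ i j, 0 ≤ A i j) →
      ∀ j, Matrix.vecMul β A j ≤ ‖A‖ := by
    intro A hA j
    have hrow : ∀ i, A i j ≤ ‖A‖ := by
      intro i
      have h1 : A i j ≤ ∑ k, ‖A i k‖ := by
        calc A i j = ‖A i j‖ := (Real.norm_of_nonneg (hA i j)).symm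
          _ ≤ ∑ k, ‖A i k‖ := Finset.single_le_sum (fun k _ => norm_nonneg _) (Finset.mem_univ j)
      refine h1.trans ?_
      have := Matrix.linfty_opNorm_def A
      rw [this]
      have h2 : (∑ k, ‖A i k‖₊ : NNReal) ≤ (Finset.univ : Finset (Fin S)).sup
          fun i => ∑ k, ‖A i k‖₊ :=
        Finset.le_sup (f := fun i => ∑ k, ‖A i k‖₊) (Finset.mem_univ i)
      calc (∑ k, ‖A i k‖ : ℝ) = ((∑ k, ‖A i k‖₊ : NNReal) : ℝ) := by
            push_cast [NNReal.coe_sum]; rfl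
        _ ≤ _ := NNReal.coe_le_coe.2 h2
    calc Matrix.vecMul β A j = ∑ i, β i * A i j := by
          simp [Matrix.vecMul, dotProduct]
      _ ≤ ∑ i, β i * ‖A‖ := Finset.sum_le_sum fun i _ =>
          mul_le_mul_of_nonneg_left (hrow i) (hβ0 i)
      _ = ‖A‖ := by rw [← Finset.sum_mul, hβ1, one_mul]
  -- coordinates of β ᵥ* Rf^n tend to 0
  have hcoordtendsto : ∀ j, Tendsto (fun n : ℕ => Matrix.vecMul β (Rf ^ n) j)
      atTop (nhds 0) := by
    intro j
    refine squeeze_zero (fun n => ?_) (fun n => hentry _ (hRfpow0 n) j) hnormtendsto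
    simp only [Matrix.vecMul, dotProduct]
    exact Finset.sum_nonneg fun i _ => mul_nonneg (hβ0 i) (hRfpow0 n i j)
  -- coordinatewise HasSum
  have hcoord : ∀ j, HasSum (fun q : ℕ => statPhi R p β q j) (β j) := by
    intro j
    rw [hasSum_iff_tendsto_nat_of_nonneg (fun q => hphi0 q j)]
    have heq : (fun n : ℕ => ∑ q ∈ Finset.range n, statPhi R p β q j)
        = fun n : ℕ => β j - Matrix.vecMul β (Rf ^ n) j := by
      funext n
      have := congrFun (hpartial n) j
      simpa [Finset.sum_apply] using this
    rw [heq]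
    simpa using tendsto_const_nhds.sub (hcoordtendsto j)
  have hHasSum : HasSum (fun q : ℕ => statPhi R p β q) β := Pi.hasSum.2 hcoord
  -- the total-mass statement
  have hmass : HasSum (fun q : ℕ => ∑ j, statPhi R p β q j) 1 := by
    have := hasSum_sum (f := fun j (q : ℕ) => statPhi R p β q j) (a := β)
      (s := (Finset.univ : Finset (Fin S))) (fun j _ => hcoord j)
    rwa [hβ1] at this
  -- recursion
  have hrec : ∀ q : ℕ, statPhi R p β (q + 1) =
      Matrix.vecMul (statPhi R p β q) Rf := by
    intro q
    unfold statPhi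
    rw [← hRfdef, ← hRsdef, pow_succ, ← Matrix.vecMul_vecMul]
  -- initial condition
  have hinit : statPhi R p β 0 = Matrix.vecMul (∑' q : ℕ, statPhi R p β q) Rs := by
    rw [hHasSum.tsum_eq]
    unfold statPhi
    rw [← hRsdef, pow_zero, Matrix.vecMul_one]
  exact ⟨hphi0, hHasSum, hmass, hrec, hinit⟩
end

section
/- Let R be an S×S real matrix with nonnegative entries and all row sums equal to 1, and suppose R is primitive, i.e., there exists a positive integer n such that every entry of R^n is strictly positive. Let p : Fin S → ℝ satisfy 0 ≤ p_i ≤ 1 for all i and p_{s₀} > 0 for some state s₀. Then the substochastic matrix R_fail = (I − diag(p))·R is eventually a strict contraction in the row-sum sense: there exists a positive integer m such that for every row i, ∑_j ((R_fail)^m)_{ij} < 1; equivalently, ‖(R_fail)^m‖ < 1 in the ℓ∞ operator norm, so the spectral radius of R_fail is strictly less than 1 and I − R_fail is invertible. -/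
open Matrix

-- The `ℓ∞` operator norm (maximum absolute row sum) on square matrices.
attribute [local instance] Matrix.linftyOpNormedRing
attribute [local instance] Matrix.linftyOpNormedAlgebra

/-- If `R` is a primitive row-stochastic matrix (irreducible and aperiodic chain) and
the observation probability `p` is positive in some state, then the substochastic
matrix `R_fail = (I − diag(p))·R` is eventually a strict contraction in the row-sum
sense: there is a positive integer `m` with all row sums of `R_fail^m` strictly below
`1`, equivalently `‖R_fail^m‖ < 1` in the `ℓ∞` operator norm; hence the spectral
radius of `R_fail` is strictly less than `1` and `I − R_fail` is invertible. -/
theorem fail_matrix_eventually_contracting {S : ℕ} (R : Matrix (Fin S) (Fin S) ℝ)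
    (hR0 : ∀ i j, 0 ≤ R i j) (hR1 : ∀ i, ∑ j, R i j = 1)
    (hprim : ∃ n : ℕ, 0 < n ∧ ∀ i j, 0 < (R ^ n) i j)
    (p : Fin S → ℝ) (hp : ∀ i, 0 ≤ p i ∧ p i ≤ 1)
    (s₀ : Fin S) (hs₀ : 0 < p s₀) :
    ∃ m : ℕ, 0 < m ∧
      (∀ i, ∑ j, (((1 - Matrix.diagonal p) * R) ^ m) i j < 1) ∧
      ‖((1 - Matrix.diagonal p) * R) ^ m‖ < 1 ∧
      spectralRadius ℝ ((1 - Matrix.diagonal p) * R) < 1 ∧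
      IsUnit (1 - (1 - Matrix.diagonal p) * R) := by
  obtain ⟨n, hn, hRn⟩ := hprim
  have : Nonempty (Fin S) := ⟨s₀⟩
  set F : Matrix (Fin S) (Fin S) ℝ := (1 - Matrix.diagonal p) * R with hF
  -- entrywise formula for F
  have hFd : (1 : Matrix (Fin S) (Fin S) ℝ) - Matrix.diagonal p
      = Matrix.diagonal (fun i => 1 - p i) := by
    rw [← Matrix.diagonal_one, ← Matrix.diagonal_sub]
  have hFe : ∀ i j, F i j = (1 - p i) * R i j := by
    intro i j
    rw [hF, hFd, Matrix.diagonal_mul]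
  -- nonnegativity of F and its powers
  have hF0 : ∀ i j, 0 ≤ F i j := by
    intro i j
    rw [hFe]
    exact mul_nonneg (by linarith [(hp i).2]) (hR0 i j)
  have hFpow0 : ∀ m i j, 0 ≤ (F ^ m) i j := by
    intro m
    induction m with
    | zero => intro i j; rw [pow_zero]; by_cases h : i = j <;>
        simp [Matrix.one_apply, h]
    | succ k ih =>
      intro i j
      rw [pow_succ, Matrix.mul_apply]
      exact Finset.sum_nonneg fun k' _ => mul_nonneg (ih i k') (hF0 k' j)
  -- powers of R are nonnegative
  have hRpow0 : ∀ m i j, 0 ≤ (R ^ m) i j := by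
    intro m
    induction m with
    | zero => intro i j; rw [pow_zero]; by_cases h : i = j <;>
        simp [Matrix.one_apply, h]
    | succ k ih =>
      intro i j
      rw [pow_succ, Matrix.mul_apply]
      exact Finset.sum_nonneg fun k' _ => mul_nonneg (ih i k') (hR0 k' j)
  -- powers of F are entrywise dominated by powers of R
  have hdom : ∀ m i j, (F ^ m) i j ≤ (R ^ m) i j := by
    intro m
    induction m with
    | zero => intro i j; simp
    | succ k ih =>
      intro i j
      rw [pow_succ, pow_succ, Matrix.mul_apply, Matrix.mul_apply]
      refine Finset.sum_le_sum fun k' _ => ?_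
      have h1 : F k' j ≤ R k' j := by
        rw [hFe]
        nlinarith [hR0 k' j, (hp k').1]
      exact mul_le_mul (ih i k') h1 (hF0 k' j) (hRpow0 k i k')
  -- row sums of powers of R are 1
  have hRsum : ∀ m i, ∑ j, (R ^ m) i j = 1 := by
    intro m
    induction m with
    | zero => intro i; simp [Matrix.one_apply]
    | succ k ih =>
      intro i
      rw [pow_succ]
      simp_rw [Matrix.mul_apply]
      rw [Finset.sum_comm]
      simp_rw [← Finset.mul_sum, hR1, mul_one]
      exact ih i
  -- row-sum recursion for powers of F
  have hFrow : ∀ t, ∑ j, F t j = 1 - p t := by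
    intro t
    simp_rw [hFe, ← Finset.mul_sum, hR1, mul_one]
  have hFrec : ∀ m i, ∑ j, (F ^ (m + 1)) i j = ∑ t, (F ^ m) i t * (1 - p t) := by
    intro m i
    rw [pow_succ]
    simp_rw [Matrix.mul_apply]
    rw [Finset.sum_comm]
    simp_rw [← Finset.mul_sum, hFrow]
  -- the key strict row-sum bound at exponent n + 1
  have hrow : ∀ i, ∑ j, (F ^ (n + 1)) i j < 1 := by
    intro i
    have hs_le : ∑ t, (F ^ n) i t ≤ 1 := by
      rw [← hRsum n i]
      exact Finset.sum_le_sum fun t _ => hdom n i t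
    have hkey : ∑ t, (F ^ n) i t * (1 - p t)
        ≤ (∑ t, (F ^ n) i t) - (F ^ n) i s₀ * p s₀ := by
      have : ∑ t, (F ^ n) i t * (1 - p t)
          = (∑ t, (F ^ n) i t) - ∑ t, (F ^ n) i t * p t := by
        rw [← Finset.sum_sub_distrib]
        congr 1
        ext t
        ring
      rw [this]
      have hsingle : (F ^ n) i s₀ * p s₀ ≤ ∑ t, (F ^ n) i t * p t :=
        Finset.single_le_sum
          (fun t _ => mul_nonneg (hFpow0 n i t) (hp t).1) (Finset.mem_univ s₀)
      linarith
    rw [hFrec]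
    rcases lt_or_eq_of_le hs_le with hlt | heq
    · have h0 : 0 ≤ (F ^ n) i s₀ * p s₀ :=
        mul_nonneg (hFpow0 n i s₀) (le_of_lt hs₀)
      linarith
    · -- row sum equals 1, so F^n i s₀ = R^n i s₀ > 0
      have hzero : ∑ t, ((R ^ n) i t - (F ^ n) i t) = 0 := by
        rw [Finset.sum_sub_distrib, hRsum n i, heq, sub_self]
      have hall : ∀ t ∈ Finset.univ, (R ^ n) i t - (F ^ n) i t = 0 := by
        refine (Finset.sum_eq_zero_iff_of_nonneg ?_).mp hzero
        intro t _
        linarith [hdom n i t]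
      have hFs₀ : 0 < (F ^ n) i s₀ := by
        have := hall s₀ (Finset.mem_univ s₀)
        have := hRn i s₀
        linarith
      have : 0 < (F ^ n) i s₀ * p s₀ := mul_pos hFs₀ hs₀
      linarith
  -- the norm bound
  have hnorm : ‖F ^ (n + 1)‖ < 1 := by
    rw [Matrix.linfty_opNorm_def]
    have hsup : ((Finset.univ : Finset (Fin S)).sup
        fun i => ∑ j, ‖(F ^ (n + 1)) i j‖₊) < 1 := by
      rw [Finset.sup_lt_iff (by norm_num : (⊥ : NNReal) < 1)]
      intro i _
      rw [← NNReal.coe_lt_coe]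
      push_cast
      calc ∑ j, ‖(F ^ (n + 1)) i j‖ = ∑ j, (F ^ (n + 1)) i j := by
            refine Finset.sum_congr rfl fun j _ => ?_
            rw [Real.norm_eq_abs, abs_of_nonneg (hFpow0 _ i j)]
        _ < 1 := hrow i
    exact_mod_cast hsup
  -- the spectral radius bound
  have hnn : ‖F ^ (n + 1)‖₊ < 1 := by
    rwa [← NNReal.coe_lt_coe, coe_nnnorm, NNReal.coe_one]
  have hsp : spectralRadius ℝ F < 1 := by
    have h := spectrum.spectralRadius_le_pow_nnnorm_pow_one_div ℝ F n
    rw [nnnorm_one, ENNReal.coe_one, ENNReal.one_rpow, mul_one] at h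
    refine lt_of_le_of_lt h ?_
    have h1 : (‖F ^ (n + 1)‖₊ : ENNReal) < 1 := by
      rw [← ENNReal.coe_one, ENNReal.coe_lt_coe]; exact hnn
    exact ENNReal.rpow_lt_one h1 (by positivity)
  -- invertibility of 1 - F
  have hunit : IsUnit (1 - F) := by
    have hnotmem : (1 : ℝ) ∉ spectrum ℝ F := by
      intro hmem
      have h1 : (‖(1 : ℝ)‖₊ : ENNReal) ≤ spectralRadius ℝ F :=
        le_iSup₂ (f := fun k (_ : k ∈ spectrum ℝ F) => (‖k‖₊ : ENNReal)) 1 hmem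
      rw [nnnorm_one, ENNReal.coe_one] at h1
      exact absurd (lt_of_le_of_lt h1 hsp) (lt_irrefl _)
    have := spectrum.notMem_iff.mp hnotmem
    rwa [_root_.map_one] at this
  exact ⟨n + 1, Nat.succ_pos n, hrow, hnorm, hsp, hunit⟩
end

section
/- (Monotonicity of the value function in the ages, Lemma used for Theorem 2.) Fix K ≥ 1 sources, N ≥ 1 sensors, a discount factor α with 0 < α < 1, and for each source k ∈ Fin K: a finite state space Fin S_k, a transition matrix R_k with nonnegative entries and row sums 1, observation probabilities P_{n,k,s} ∈ [0,1] for each sensor n and state s, and channel success probabilities q_n ∈ [0,1]. A system state is a pair (s, Δ) with s ∈ ∏_k Fin S_k and Δ : Fin K → ℕ. Define the one-step cost C((s,Δ), a) = 1 + (1/K) ∑_k Δ_k · (1 − q_a · P_{a,k,s_k}), and define the value-iteration sequence V_0 ≡ 0 and V_{n+1}(s, Δ) = min_{a ∈ Fin N} [ C((s,Δ), a) + α · ∑_{s' ∈ ∏_k Fin S_k} ∑_{ζ : Fin K → Bool} (∏_k (R_k)_{s_k, s'_k}) · (∏_k (if ζ_k then q_a·P_{a,k,s_k} else 1 − q_a·P_{a,k,s_k}))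 · V_n(s', Δ^ζ) ], where Δ^ζ_k = 1 if ζ_k = true and Δ^ζ_k = Δ_k + 1 otherwise. Then for every n, every s, and all age vectors Δ, Δ' with Δ_k ≤ Δ'_k for all k, one has V_n(s, Δ) ≤ V_n(s, Δ'); i.e., each value-iteration iterate is nondecreasing in the age of every source. -/
open Matrix

/-- Value iteration for the discounted monitoring MDP. A system state is a pair
`(s, Δ)` with `s : ∀ k, Fin (S k)` the source states and `Δ : Fin K → ℕ` the ages.
`V 0 ≡ 0`, and `V (n+1) (s, Δ)` is the minimum over sensors `a : Fin N` of the
one-step cost `1 + (1/K) ∑_k Δ_k (1 − q_a P_{a,k,s_k})` plus `α` times the expected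
value of `V n` at the next state, where each source `k` is observed (indicator
`ζ k`) with probability `q_a·P_{a,k,s_k}` (age resets to `1`, otherwise `Δ_k + 1`)
and its state transitions according to `R k`. -/
noncomputable def valueIter (K N : ℕ) (hN : 0 < N) (α : ℝ) (S : Fin K → ℕ)
    (R : ∀ k : Fin K, Matrix (Fin (S k)) (Fin (S k)) ℝ)
    (P : Fin N → ∀ k : Fin K, Fin (S k) → ℝ)
    (q : Fin N → ℝ) :
    ℕ → (∀ k : Fin K, Fin (S k)) → (Fin K → ℕ) → ℝ
  | 0, _, _ => 0
  | n + 1, s, Δ =>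
    haveI : Nonempty (Fin N) := ⟨⟨0, hN⟩⟩
    Finset.univ.inf' Finset.univ_nonempty fun a : Fin N =>
      (1 + (1 / (K : ℝ)) * ∑ k, (Δ k : ℝ) * (1 - q a * P a k (s k))) +
        α * ∑ s' : ∀ k : Fin K, Fin (S k), ∑ ζ : Fin K → Bool,
          (∏ k, R k (s k) (s' k)) *
            (∏ k, if ζ k then q a * P a k (s k) else 1 - q a * P a k (s k)) *
            valueIter K N hN α S R P q n s' (fun k => if ζ k then 1 else Δ k + 1)

/-- **Monotonicity of the value-iteration iterates in the ages.**
Each iterate `V_n` of value iteration for the discounted monitoring MDP is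
nondecreasing in the age of every source: if `Δ_k ≤ Δ'_k` for all `k`, then
`V_n(s, Δ) ≤ V_n(s, Δ')`. -/
theorem valueIter_mono_in_age (K N : ℕ) (hK : 0 < K) (hN : 0 < N)
    (α : ℝ) (hα : 0 < α ∧ α < 1) (S : Fin K → ℕ)
    (R : ∀ k : Fin K, Matrix (Fin (S k)) (Fin (S k)) ℝ)
    (P : Fin N → ∀ k : Fin K, Fin (S k) → ℝ)
    (q : Fin N → ℝ)
    (hR0 : ∀ k i j, 0 ≤ R k i j) (hR1 : ∀ k i, ∑ j, R k i j = 1)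
    (hP : ∀ n k s, 0 ≤ P n k s ∧ P n k s ≤ 1)
    (hq : ∀ n, 0 ≤ q n ∧ q n ≤ 1) :
    ∀ (n : ℕ) (s : ∀ k : Fin K, Fin (S k)) (Δ Δ' : Fin K → ℕ),
      (∀ k, Δ k ≤ Δ' k) →
      valueIter K N hN α S R P q n s Δ ≤ valueIter K N hN α S R P q n s Δ' := by
  intro n
  induction n with
  | zero => intro s Δ Δ' h; simp [valueIter]
  | succ n ih =>
    intro s Δ Δ' h
    rw [valueIter, valueIter]
    apply Finset.le_inf'
    intro a ha
    refine le_trans (Finset.inf'_le _ ha) ?_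
    have hqP : ∀ k, 0 ≤ q a * P a k (s k) ∧ q a * P a k (s k) ≤ 1 := by
      intro k
      constructor
      · exact mul_nonneg (hq a).1 (hP a k (s k)).1
      · exact mul_le_one₀ (hq a).2 (hP a k (s k)).1 (hP a k (s k)).2
    have h1 : ∀ k, (0:ℝ) ≤ 1 - q a * P a k (s k) := fun k => by linarith [(hqP k).2]
    apply add_le_add
    · apply add_le_add_right
      apply mul_le_mul_of_nonneg_left (Finset.sum_le_sum fun k _ =>
        mul_le_mul_of_nonneg_right (Nat.cast_le.2 (h k)) (h1 k)) (by positivity)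
    · apply mul_le_mul_of_nonneg_left _ hα.1.le
      apply Finset.sum_le_sum; intro s' _
      apply Finset.sum_le_sum; intro ζ _
      apply mul_le_mul_of_nonneg_left
      · apply ih
        intro k
        by_cases hζ : ζ k <;> simp [hζ, h k]
      · apply mul_nonneg
        · exact Finset.prod_nonneg fun k _ => hR0 k (s k) (s' k)
        · refine Finset.prod_nonneg fun k _ => ?_
          by_cases hζ : ζ k <;> simp [hζ]
          · exact (hqP k).1
          · exact (hqP k).2
end
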